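/- Let q ≥ 2, n ≥ 1, let 𝐚 be a quasicode of length n over an alphabet of size q, and let T = {b_1 < b_2 < ⋯ < b_t} be a pair covering of 𝐚. Suppose (a) 𝐚 is a (t−1)-design, and (b) for each 1 ≤ j ≤ t−1 the function q_j(x) = Π_{i=0}^{j−1} (b_{t−i} − x) on {0,1,…,n} is positive definite. Then 𝐚 is a universally optimal quasicode. -/

import Mathlib

open Finset

/-- The Krawtchouk polynomial `K_k(x; n, q)` evaluated at a natural number `x`. -/
noncomputable def kraw (n q k x : ℕ) : ℝ :=
  ∑ j ∈ Finset.range (k+1),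
    (-1 : ℝ)^j * ((q : ℝ) - 1)^(k-j) * (x.choose j : ℝ) * ((n-x).choose (k-j) : ℝ)

/-- The finite difference operator `Δf(m) = f(m+1) − f(m)`. -/
def fdiff (f : ℕ → ℝ) : ℕ → ℝ := fun m => f (m+1) - f m

/-- `f` is completely monotonic on `{a, a+1, …, b}`:
`(−1)^k Δ^k f(i) ≥ 0` whenever `k ≥ 0` and `a ≤ i ≤ b − k`. -/
def CompletelyMonotonicOn (f : ℕ → ℝ) (a b : ℕ) : Prop :=
  ∀ k i, a ≤ i → i + k ≤ b → 0 ≤ (-1 : ℝ)^k * (fdiff^[k] f) i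

/-- A quasicode of length `n` and size `N` over an alphabet of size `q`,
recorded via its entries `A 0, …, A n`. -/
structure IsQuasicode (q n : ℕ) (N : ℝ) (A : ℕ → ℝ) : Prop where
  nonneg : ∀ i, i ≤ n → 0 ≤ A i
  delsarte : ∀ j, j ≤ n → 0 ≤ ∑ i ∈ Finset.range (n+1), A i * kraw n q j i
  size : ∑ i ∈ Finset.range (n+1), A i = N
  zeroth : A 0 = 1

/-- A universally optimal quasicode: a quasicode that minimizes `f`-energy
among all quasicodes of the same length and size, for every completely
monotonic potential function `f`. -/
def IsUOQuasicode (q n : ℕ) (N : ℝ) (A : ℕ → ℝ) : Prop :=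
  IsQuasicode q n N A ∧
    ∀ f : ℕ → ℝ, CompletelyMonotonicOn f 0 n →
      ∀ B : ℕ → ℝ, IsQuasicode q n N B →
        ∑ i ∈ Finset.range (n+1), f i * A i ≤ ∑ i ∈ Finset.range (n+1), f i * B i

/-- The quasicode `A` (of size `N`) is a `t`-design: `A^⊥_j = 0` for `1 ≤ j ≤ t`. -/
def IsDesign (q n t : ℕ) (A : ℕ → ℝ) : Prop :=
  ∀ j, 1 ≤ j → j ≤ t → ∑ i ∈ Finset.range (n+1), A i * kraw n q j i = 0

/-- `h : {0,…,n} → ℝ` is positive definite: its (unique) Krawtchouk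
coefficients are all nonnegative. -/
def PositiveDefinite (q n : ℕ) (h : ℕ → ℝ) : Prop :=
  ∃ c : ℕ → ℝ, (∀ j, j ≤ n → 0 ≤ c j) ∧
    ∀ i, i ≤ n → h i = ∑ j ∈ Finset.range (n+1), c j * kraw n q j i

open scoped Classical in
/-- The support of a quasicode: `{i > 0 : A i ≠ 0}`. -/
noncomputable def supp (n : ℕ) (A : ℕ → ℝ) : Finset ℕ :=
  (Finset.Icc 1 n).filter (fun i => A i ≠ 0)

/-- `b 0 < b 1 < ⋯ < b (t-1)` lists a pair covering of the quasicode `A`: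
a subset of `{1,…,n}` containing the support of `A`, whose elements pair up
into consecutive pairs, except that if `t` is odd the last element is `n`. -/
structure IsPairCovering (n t : ℕ) (A : ℕ → ℝ) (b : ℕ → ℕ) : Prop where
  mono : ∀ i j, i < j → j < t → b i < b j
  mem : ∀ i, i < t → 1 ≤ b i ∧ b i ≤ n
  covers : ∀ i, 1 ≤ i → i ≤ n → A i ≠ 0 → ∃ k, k < t ∧ b k = i
  pairs : ∀ i, 2*i+1 < t → b (2*i) + 1 = b (2*i+1)
  odd_end : Odd t → b (t-1) = n

noncomputable def ddP (S : Finset ℕ) (x : ℕ) : ℝ := ∏ j ∈ S, ((x : ℝ) - j)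

noncomputable def dd (f : ℕ → ℝ) (S : Finset ℕ) : ℝ :=
  ∑ i ∈ S, f i / ddP (S.erase i) i

lemma ddP_ne_zero {S : Finset ℕ} {x : ℕ} (hx : x ∉ S) : ddP S x ≠ 0 := by
  refine Finset.prod_ne_zero_iff.2 (fun j hj => ?_)
  have : x ≠ j := fun h => hx (h ▸ hj)
  intro h
  apply this
  have : (x:ℝ) = j := by linarith [sub_eq_zero.mp h]
  exact_mod_cast this

lemma dd_singleton (f : ℕ → ℝ) (x : ℕ) : dd f {x} = f x := by
  simp [dd, ddP]

lemma dd_insert (f : ℕ → ℝ) {T : Finset ℕ} {a : ℕ} (ha : a ∉ T) :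
    dd f (insert a T) = f a / ddP T a
      + ∑ i ∈ T, f i / (((i:ℝ) - a) * ddP (T.erase i) i) := by
  rw [dd, Finset.sum_insert ha, Finset.erase_insert ha]
  congr 1
  refine Finset.sum_congr rfl (fun i hi => ?_)
  have hia : i ≠ a := fun h => ha (h ▸ hi)
  rw [Finset.erase_insert_of_ne hia.symm, ddP,
    Finset.prod_insert (fun h => ha (Finset.mem_erase.1 h).2)]
  rfl

lemma dd_rec (f : ℕ → ℝ) {S : Finset ℕ} {a b : ℕ} (ha : a ∉ S) (hb : b ∉ S) (hab : a ≠ b) :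
    dd f (insert a (insert b S)) * ((a:ℝ) - b) = dd f (insert a S) - dd f (insert b S) := by
  have hab' : ((a:ℝ) - b) ≠ 0 := by
    intro h
    exact hab (by exact_mod_cast (by linarith [sub_eq_zero.mp h] : (a:ℝ) = b))
  have haT : a ∉ insert b S := by simp [hab, ha]
  rw [dd_insert f haT, dd_insert f ha, dd_insert f hb]
  rw [Finset.sum_insert hb, Finset.erase_insert hb]
  have hPa : ddP (insert b S) a = ((a:ℝ) - b) * ddP S a := by
    rw [ddP, Finset.prod_insert hb]; rfl
  have hrw : ∀ i ∈ S, f i / (((i:ℝ) - a) * ddP ((insert b S).erase i) i)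
      = f i / (((i:ℝ) - a) * (((i:ℝ) - b) * ddP (S.erase i) i)) := by
    intro i hi
    have hib : i ≠ b := fun h => hb (h ▸ hi)
    rw [Finset.erase_insert_of_ne hib.symm, ddP,
      Finset.prod_insert (fun h => hb (Finset.mem_erase.1 h).2)]
    rfl
  rw [Finset.sum_congr rfl hrw, hPa]
  have hPSa : ddP S a ≠ 0 := ddP_ne_zero ha
  have hPSb : ddP S b ≠ 0 := ddP_ne_zero hb
  rw [add_mul, add_mul, Finset.sum_mul]
  have hterm : ∀ i ∈ S,
      f i / (((i:ℝ) - a) * (((i:ℝ) - b) * ddP (S.erase i) i)) * ((a:ℝ) - b)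
      = f i / (((i:ℝ) - a) * ddP (S.erase i) i) - f i / (((i:ℝ) - b) * ddP (S.erase i) i) := by
    intro i hi
    have hia : ((i:ℝ) - a) ≠ 0 := by
      intro h
      exact ha (by rwa [(by exact_mod_cast (by linarith [sub_eq_zero.mp h] : (i:ℝ) = a) : i = a)] at hi)
    have hib : ((i:ℝ) - b) ≠ 0 := by
      intro h
      exact hb (by rwa [(by exact_mod_cast (by linarith [sub_eq_zero.mp h] : (i:ℝ) = b) : i = b)] at hi)
    have hP : ddP (S.erase i) i ≠ 0 := ddP_ne_zero (Finset.notMem_erase i S)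
    field_simp
    ring
  rw [Finset.sum_congr rfl hterm, Finset.sum_sub_distrib]
  have h1 : f a / ((↑a - ↑b) * ddP S a) * (↑a - ↑b) = f a / ddP S a := by
    field_simp
  have h2 : f b / ((↑b - ↑a) * ddP S b) * (↑a - ↑b) = - (f b / ddP S b) := by
    have : ((b:ℝ) - a) ≠ 0 := by intro h; apply hab'; linarith
    field_simp
    ring
  rw [h1, h2]
  ring

lemma dd_Icc (f : ℕ → ℝ) (m k : ℕ) :
    dd f (Finset.Icc m (m+k)) = fdiff^[k] f m / (k.factorial : ℝ) := by
  induction k generalizing m with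
  | zero => simp [dd_singleton]
  | succ k ih =>
    have h1 : Finset.Icc m (m+(k+1)) = insert (m+k+1) (Finset.Icc m (m+k)) := by
      ext x; simp; omega
    have h2 : insert (m+k+1) (Finset.Icc (m+1) (m+k)) = Finset.Icc (m+1) ((m+1)+k) := by
      ext x; simp; omega
    have h3 : insert m (Finset.Icc (m+1) (m+k)) = Finset.Icc m (m+k) := by
      ext x; simp; omega
    have ha : (m+k+1) ∉ Finset.Icc (m+1) (m+k) := by simp
    have hb : m ∉ Finset.Icc (m+1) (m+k) := by simp
    have hab : m+k+1 ≠ m := by omega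
    have key := dd_rec f ha hb hab
    rw [h2, h3] at key
    have hd : ((m+k+1 : ℕ):ℝ) - (m:ℕ) = (k:ℝ)+1 := by push_cast; ring
    rw [hd, ih, ih, ← h1] at key
    have hiter : fdiff^[k] f (m+1) - fdiff^[k] f m = fdiff^[k+1] f m := by
      rw [Function.iterate_succ_apply']
      rfl
    have hfac : ((k+1).factorial : ℝ) = (k.factorial : ℝ) * ((k:ℝ)+1) := by
      rw [Nat.factorial_succ]; push_cast; ring
    have hkf : (k.factorial : ℝ) ≠ 0 := by positivity
    have hk1 : ((k:ℝ)+1) ≠ 0 := by positivity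
    rw [div_sub_div_same, hiter] at key
    rw [eq_div_iff (by rw [hfac]; positivity), hfac]
    calc dd f (Finset.Icc m (m+(k+1))) * ((k.factorial:ℝ) * ((k:ℝ)+1))
        = (dd f (Finset.Icc m (m+(k+1))) * ((k:ℝ)+1)) * (k.factorial:ℝ) := by ring
      _ = (fdiff^[k+1] f m / (k.factorial:ℝ)) * (k.factorial:ℝ) := by rw [key]
      _ = fdiff^[k+1] f m := by field_simp

lemma dd_sign_aux (n : ℕ) (f : ℕ → ℝ) (hf : CompletelyMonotonicOn f 0 n) :
    ∀ d : ℕ, ∀ S : Finset ℕ, ∀ hS : S.Nonempty, (∀ x ∈ S, x ≤ n) →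
      S.max' hS - S.min' hS = d → 0 ≤ (-1:ℝ)^(S.card - 1) * dd f S := by
  intro d
  induction d using Nat.strong_induction_on with
  | _ d ih =>
    intro S hS hSn hd
    set a := S.min' hS with hadef
    set c := S.max' hS with hcdef
    have haS : a ∈ S := S.min'_mem hS
    have hcS : c ∈ S := S.max'_mem hS
    have hac : a ≤ c := S.min'_le c hcS
    have hsub : S ⊆ Finset.Icc a c := by
      intro x hx
      exact Finset.mem_Icc.2 ⟨S.min'_le x hx, S.le_max' x hx⟩
    have hcard_le : S.card ≤ d + 1 := by
      have := Finset.card_le_card hsub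
      rwa [Nat.card_Icc, show c + 1 - a = d + 1 by omega] at this
    rcases eq_or_lt_of_le (Nat.sub_le_iff_le_add.2 hcard_le : S.card - 1 ≤ d) with hbase | hstep
    · -- consecutive case
      have hcards : S.card = d + 1 := by
        have h1 : 1 ≤ S.card := Finset.card_pos.2 hS
        omega
      have hSeq : S = Finset.Icc a c := by
        apply Finset.eq_of_subset_of_card_le hsub
        rw [Nat.card_Icc, hcards]; omega
      have hceq : c = a + d := by omega
      rw [hSeq, hceq, dd_Icc]
      have hcc : #(Finset.Icc a (a + d)) - 1 = d := by rw [Nat.card_Icc]; omega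
      rw [hcc]
      have h1 := hf d a (Nat.zero_le a) (by
        have : c ≤ n := hSn c hcS
        omega)
      have h2 : (0:ℝ) < (d.factorial : ℝ) := by positivity
      rw [mul_div_assoc'] at *
      positivity
    · -- gap case
      have hgap : (Finset.Icc a c \ S).Nonempty := by
        rw [← Finset.card_pos, Finset.card_sdiff_of_subset hsub, Nat.card_Icc]
        omega
      obtain ⟨y, hy⟩ := hgap
      rw [Finset.mem_sdiff, Finset.mem_Icc] at hy
      obtain ⟨⟨hay, hyc⟩, hyS⟩ := hy
      have hya : y ≠ a := fun h => hyS (h ▸ haS)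
      have hyc' : y ≠ c := fun h => hyS (h ▸ hcS)
      have hay' : a < y := lt_of_le_of_ne hay (Ne.symm hya)
      have hyc'' : y < c := lt_of_le_of_ne hyc hyc'
      set S₁ := insert y (S.erase c) with hS1def
      set S₂ := insert y (S.erase a) with hS2def
      -- identities from dd_rec
      have hcT : c ∉ S.erase c := Finset.notMem_erase c S
      have hyT : y ∉ S.erase c := fun h => hyS (Finset.mem_of_mem_erase h)
      have hcy : c ≠ y := Ne.symm hyc'
      have e1 := dd_rec f hcT hyT hcy
      rw [Finset.insert_comm, Finset.insert_erase hcS] at e1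
      have haT : a ∉ S.erase a := Finset.notMem_erase a S
      have hyT2 : y ∉ S.erase a := fun h => hyS (Finset.mem_of_mem_erase h)
      have hay2 : a ≠ y := hya.symm
      have e2 := dd_rec f haT hyT2 hay2
      rw [Finset.insert_comm, Finset.insert_erase haS] at e2
      -- combine
      have key : dd f S * ((c:ℝ) - a) = ((y:ℝ) - a) * dd f S₁ + ((c:ℝ) - y) * dd f S₂ := by
        linear_combination ((a:ℝ) - y) * e1 + ((y:ℝ) - c) * e2
      -- apply IH
      have hcard1 : S₁.card = S.card := by
        rw [hS1def, Finset.card_insert_of_notMem hyT, Finset.card_erase_of_mem hcS]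
        have : 1 ≤ S.card := Finset.card_pos.2 hS
        omega
      have hcard2 : S₂.card = S.card := by
        rw [hS2def, Finset.card_insert_of_notMem hyT2, Finset.card_erase_of_mem haS]
        have : 1 ≤ S.card := Finset.card_pos.2 hS
        omega
      have hS1ne : S₁.Nonempty := ⟨y, Finset.mem_insert_self y _⟩
      have hS2ne : S₂.Nonempty := ⟨y, Finset.mem_insert_self y _⟩
      have hS1n : ∀ x ∈ S₁, x ≤ n := by
        intro x hx
        rcases Finset.mem_insert.1 hx with h | h
        · exact h ▸ le_trans (le_of_lt hyc'') (hSn c hcS)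
        · exact hSn x (Finset.mem_of_mem_erase h)
      have hS2n : ∀ x ∈ S₂, x ≤ n := by
        intro x hx
        rcases Finset.mem_insert.1 hx with h | h
        · exact h ▸ le_trans (le_of_lt hyc'') (hSn c hcS)
        · exact hSn x (Finset.mem_of_mem_erase h)
      have hspread1 : S₁.max' hS1ne - S₁.min' hS1ne < d := by
        have hmax : S₁.max' hS1ne ≤ c - 1 := by
          apply Finset.max'_le
          intro x hx
          rcases Finset.mem_insert.1 hx with h | h
          · omega
          · have h1 := Finset.mem_erase.1 h
            have := S.le_max' x h1.2
            omega
        have hmin : a ≤ S₁.min' hS1ne := by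
          have := S₁.min'_mem hS1ne
          rcases Finset.mem_insert.1 this with h | h
          · omega
          · exact S.min'_le _ (Finset.mem_of_mem_erase h)
        omega
      have hspread2 : S₂.max' hS2ne - S₂.min' hS2ne < d := by
        have hmax : S₂.max' hS2ne ≤ c := by
          apply Finset.max'_le
          intro x hx
          rcases Finset.mem_insert.1 hx with h | h
          · omega
          · exact S.le_max' x (Finset.mem_of_mem_erase h)
        have hmin : a + 1 ≤ S₂.min' hS2ne := by
          have := S₂.min'_mem hS2ne
          rcases Finset.mem_insert.1 this with h | h
          · omega
          · have h1 := Finset.mem_erase.1 h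
            have := S.min'_le _ h1.2
            have h2 : a ≤ S₂.min' hS2ne ∨ True := Or.inr trivial
            -- x = min' S₂ ∈ S, ≠ a, so > a
            have h3 : a ≤ S₂.min' hS2ne := this
            omega
        omega
      have ih1 := ih _ hspread1 S₁ hS1ne hS1n rfl
      have ih2 := ih _ hspread2 S₂ hS2ne hS2n rfl
      rw [hcard1] at ih1
      rw [hcard2] at ih2
      have hca : (0:ℝ) < (c:ℝ) - a := by
        have : a < c := by omega
        have : (a:ℝ) < c := by exact_mod_cast this
        linarith
      have hya3 : (0:ℝ) ≤ (y:ℝ) - a := by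
        have : (a:ℝ) ≤ y := by exact_mod_cast hay
        linarith
      have hcy3 : (0:ℝ) ≤ (c:ℝ) - y := by
        have : (y:ℝ) ≤ c := by exact_mod_cast hyc
        linarith
      have : (-1:ℝ)^(S.card - 1) * dd f S * ((c:ℝ) - a)
          = ((y:ℝ) - a) * ((-1:ℝ)^(S.card - 1) * dd f S₁)
            + ((c:ℝ) - y) * ((-1:ℝ)^(S.card - 1) * dd f S₂) := by
        linear_combination ((-1:ℝ)^(S.card - 1)) * key
      nlinarith [mul_nonneg hya3 ih1, mul_nonneg hcy3 ih2]

def Nodes (yf : ℕ → ℕ) (k : ℕ) : Finset ℕ := (Finset.range k).image yf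

lemma newton_aux (f : ℕ → ℝ) (yf : ℕ → ℕ) (t : ℕ)
    (hinj : ∀ i j, i < t → j < t → yf i = yf j → i = j) :
    ∀ m, m ≤ t → ∀ x : ℕ, (∀ i, i < m → x ≠ yf i) →
      f x = (∑ k ∈ Finset.range m, dd f (Nodes yf (k+1)) * ∏ i ∈ Finset.range k, ((x:ℝ) - yf i))
        + dd f (insert x (Nodes yf m)) * ∏ i ∈ Finset.range m, ((x:ℝ) - yf i) := by
  intro m
  induction m with
  | zero =>
    intro _ x _
    simp [Nodes, dd_singleton]
  | succ m ih =>
    intro hmt x hx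
    have hxm : x ∉ Nodes yf m := by
      intro h
      obtain ⟨i, hi, hix⟩ := Finset.mem_image.1 h
      rw [Finset.mem_range] at hi
      exact hx i (by omega) hix.symm
    have hym : yf m ∉ Nodes yf m := by
      intro h
      obtain ⟨i, hi, hix⟩ := Finset.mem_image.1 h
      rw [Finset.mem_range] at hi
      have := hinj i m (by omega) (by omega) hix
      omega
    have hxym : x ≠ yf m := hx m (by omega)
    have hnodes : insert (yf m) (Nodes yf m) = Nodes yf (m+1) := by
      rw [Nodes, Nodes, Finset.range_add_one, Finset.image_insert]
    have hrec := dd_rec f hxm hym hxym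
    rw [hnodes] at hrec
    have hkey : dd f (insert x (Nodes yf m))
        = dd f (Nodes yf (m+1)) + dd f (insert x (Nodes yf (m+1))) * ((x:ℝ) - yf m) := by
      linarith [hrec]
    have ihx := ih (by omega) x (fun i hi => hx i (by omega))
    rw [ihx, hkey, Finset.sum_range_succ, Finset.prod_range_succ]
    ring

lemma newton_eval_node (f : ℕ → ℝ) (yf : ℕ → ℕ) (t : ℕ)
    (hinj : ∀ i j, i < t → j < t → yf i = yf j → i = j)
    (j : ℕ) (hj : j < t) :
    f (yf j) = ∑ k ∈ Finset.range t,
      dd f (Nodes yf (k+1)) * ∏ i ∈ Finset.range k, ((yf j :ℝ) - yf i) := by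
  have h1 := newton_aux f yf t hinj j (by omega) (yf j)
    (fun i hi heq => by have := hinj j i hj (by omega) heq; omega)
  have hnodes : insert (yf j) (Nodes yf j) = Nodes yf (j+1) := by
    rw [Nodes, Nodes, Finset.range_add_one, Finset.image_insert]
  rw [hnodes] at h1
  rw [h1]
  have hzero : ∀ k ∈ Finset.range t, j + 1 ≤ k →
      dd f (Nodes yf (k+1)) * ∏ i ∈ Finset.range k, ((yf j :ℝ) - yf i) = 0 := by
    intro k _ hjk
    apply mul_eq_zero_of_right
    apply Finset.prod_eq_zero (Finset.mem_range.2 (by omega : j < k))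
    simp
  -- split range t into range (j+1) and rest
  have hsplit : ∑ k ∈ Finset.range t,
      dd f (Nodes yf (k+1)) * ∏ i ∈ Finset.range k, ((yf j :ℝ) - yf i)
      = ∑ k ∈ Finset.range (j+1),
        dd f (Nodes yf (k+1)) * ∏ i ∈ Finset.range k, ((yf j :ℝ) - yf i) := by
    rw [← Finset.sum_range_add_sum_Ico _ (by omega : j + 1 ≤ t)]
    rw [Finset.sum_eq_zero (fun k hk => hzero k (Finset.mem_range.2 (Finset.mem_Ico.1 hk).2)
      (Finset.mem_Ico.1 hk).1), add_zero]
  rw [hsplit, Finset.sum_range_succ]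

lemma kraw_zero (n q x : ℕ) : kraw n q 0 x = 1 := by
  simp [kraw]

noncomputable def KP (n q m : ℕ) : Polynomial ℝ :=
  ∑ j ∈ Finset.range (m+1),
    Polynomial.C ((-1:ℝ)^j * ((q:ℝ)-1)^(m-j) / ((j.factorial : ℝ) * ((m-j).factorial : ℝ)))
      * (descPochhammer ℝ j * (descPochhammer ℝ (m-j)).comp (Polynomial.C (n:ℝ) - Polynomial.X))

lemma KP_eval (n q m x : ℕ) (hx : x ≤ n) : (KP n q m).eval (x:ℝ) = kraw n q m x := by
  rw [KP, kraw, Polynomial.eval_finset_sum]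
  refine Finset.sum_congr rfl (fun j hj => ?_)
  rw [Polynomial.eval_mul, Polynomial.eval_C, Polynomial.eval_mul, Polynomial.eval_comp]
  have h1 : (descPochhammer ℝ j).eval (x:ℝ) = ((x.descFactorial j : ℕ) : ℝ) :=
    descPochhammer_eval_eq_descFactorial ℝ x j
  have h2 : (Polynomial.C (n:ℝ) - Polynomial.X).eval (x:ℝ) = ((n - x : ℕ) : ℝ) := by
    rw [Polynomial.eval_sub, Polynomial.eval_C, Polynomial.eval_X, Nat.cast_sub hx]
  rw [h1, h2, descPochhammer_eval_eq_descFactorial]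
  rw [Nat.descFactorial_eq_factorial_mul_choose, Nat.descFactorial_eq_factorial_mul_choose]
  have hjf : ((j.factorial : ℕ) : ℝ) ≠ 0 := by positivity
  have hmjf : (((m-j).factorial : ℕ) : ℝ) ≠ 0 := by positivity
  push_cast
  field_simp

lemma KP_natDegree_le (n q m : ℕ) : (KP n q m).natDegree ≤ m := by
  apply Polynomial.natDegree_sum_le_of_forall_le
  intro j hj
  rw [Finset.mem_range] at hj
  refine le_trans (Polynomial.natDegree_mul_le) ?_
  rw [Polynomial.natDegree_C]
  simp only [zero_add]
  refine le_trans (Polynomial.natDegree_mul_le) ?_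
  have h1 : (descPochhammer ℝ j).natDegree = j := descPochhammer_natDegree ℝ j
  have h2 : ((descPochhammer ℝ (m-j)).comp (Polynomial.C (n:ℝ) - Polynomial.X)).natDegree ≤ m - j := by
    refine le_trans (Polynomial.natDegree_comp_le) ?_
    have : (Polynomial.C (n:ℝ) - Polynomial.X).natDegree = 1 := by
      have : Polynomial.C (n:ℝ) - Polynomial.X = -(Polynomial.X - Polynomial.C (n:ℝ)) := by ring
      rw [this, Polynomial.natDegree_neg, Polynomial.natDegree_X_sub_C]
    rw [this, descPochhammer_natDegree, mul_one]
  omega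

lemma KP_coeff_top (n q m : ℕ) (hq : 1 ≤ q) :
    (KP n q m).coeff m = (-1:ℝ)^m * (q:ℝ)^m / (m.factorial : ℝ) := by
  rw [KP, Polynomial.finset_sum_coeff]
  have hterm : ∀ j ∈ Finset.range (m+1),
      (Polynomial.C ((-1:ℝ)^j * ((q:ℝ)-1)^(m-j) / ((j.factorial : ℝ) * ((m-j).factorial : ℝ)))
        * (descPochhammer ℝ j * (descPochhammer ℝ (m-j)).comp (Polynomial.C (n:ℝ) - Polynomial.X))).coeff m
      = (-1:ℝ)^j * ((q:ℝ)-1)^(m-j) / ((j.factorial : ℝ) * ((m-j).factorial : ℝ)) * (-1:ℝ)^(m-j) := by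
    intro j hj
    rw [Finset.mem_range] at hj
    rw [Polynomial.coeff_C_mul]
    have hdX : (Polynomial.C (n:ℝ) - Polynomial.X).natDegree = 1 := by
      have : Polynomial.C (n:ℝ) - Polynomial.X = -(Polynomial.X - Polynomial.C (n:ℝ)) := by ring
      rw [this, Polynomial.natDegree_neg, Polynomial.natDegree_X_sub_C]
    have hcompdeg : ((descPochhammer ℝ (m-j)).comp (Polynomial.C (n:ℝ) - Polynomial.X)).natDegree = m - j := by
      rw [Polynomial.natDegree_comp, hdX, descPochhammer_natDegree, mul_one]
    have hPdeg : (descPochhammer ℝ j).natDegree = j := descPochhammer_natDegree ℝ j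
    have hcm := Polynomial.coeff_mul_degree_add_degree (descPochhammer ℝ j)
      ((descPochhammer ℝ (m-j)).comp (Polynomial.C (n:ℝ) - Polynomial.X))
    rw [hPdeg, hcompdeg, (by omega : j + (m - j) = m)] at hcm
    rw [hcm]
    have hlc1 : (descPochhammer ℝ j).leadingCoeff = 1 := monic_descPochhammer ℝ j
    have hlcX : (Polynomial.C (n:ℝ) - Polynomial.X).leadingCoeff = -1 := by
      have : Polynomial.C (n:ℝ) - Polynomial.X = -(Polynomial.X - Polynomial.C (n:ℝ)) := by ring
      rw [this, Polynomial.leadingCoeff_neg, Polynomial.leadingCoeff_X_sub_C]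
    have hlc2 : ((descPochhammer ℝ (m-j)).comp (Polynomial.C (n:ℝ) - Polynomial.X)).leadingCoeff
        = (-1:ℝ)^(m-j) := by
      rw [Polynomial.leadingCoeff_comp (by rw [hdX]; omega), hlcX]
      rw [(monic_descPochhammer ℝ (m-j)).leadingCoeff, descPochhammer_natDegree, one_mul]
    rw [hlc1, hlc2, one_mul]
  rw [Finset.sum_congr rfl hterm]
  have hsimp : ∀ j ∈ Finset.range (m+1),
      (-1:ℝ)^j * ((q:ℝ)-1)^(m-j) / ((j.factorial : ℝ) * ((m-j).factorial : ℝ)) * (-1:ℝ)^(m-j)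
      = (-1:ℝ)^m * ((m.choose j : ℕ) : ℝ) * ((q:ℝ)-1)^(m-j) / (m.factorial : ℝ) := by
    intro j hj
    rw [Finset.mem_range] at hj
    have hch : ((m.choose j : ℕ) : ℝ) * ((j.factorial : ℕ):ℝ) * (((m-j).factorial : ℕ):ℝ)
        = ((m.factorial : ℕ):ℝ) := by
      exact_mod_cast congrArg (Nat.cast : ℕ → ℝ)
        (Nat.choose_mul_factorial_mul_factorial (by omega : j ≤ m))
    have h1 : (-1:ℝ)^j * (-1:ℝ)^(m-j) = (-1:ℝ)^m := by
      rw [← pow_add]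
      congr 1
      omega
    have hjf : ((j.factorial : ℕ) : ℝ) ≠ 0 := by positivity
    have hmjf : (((m-j).factorial : ℕ) : ℝ) ≠ 0 := by positivity
    have hmf : ((m.factorial : ℕ) : ℝ) ≠ 0 := by positivity
    rw [div_mul_eq_mul_div, div_eq_div_iff (by positivity) hmf]
    linear_combination (((q:ℝ)-1)^(m-j) * ((m.factorial : ℕ):ℝ)) * h1
      - ((-1:ℝ)^m * ((q:ℝ)-1)^(m-j)) * hch
  rw [Finset.sum_congr rfl hsimp]
  rw [← Finset.sum_div]
  congr 1
  have : ∀ j ∈ Finset.range (m+1),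
      (-1:ℝ)^m * ((m.choose j : ℕ) : ℝ) * ((q:ℝ)-1)^(m-j)
      = (-1:ℝ)^m * ((1:ℝ)^j * ((q:ℝ)-1)^(m-j) * ((m.choose j : ℕ) : ℝ)) := by
    intro j _; ring
  rw [Finset.sum_congr rfl this, ← Finset.mul_sum, ← add_pow]
  norm_num

lemma kraw_coeff_vanish (n q : ℕ) (hq : 1 ≤ q) (e : ℕ → ℝ) (p : Polynomial ℝ) (d : ℕ)
    (hdn : d ≤ n) (hpd : p.natDegree ≤ d)
    (heval : ∀ x : ℕ, x ≤ n → (∑ m ∈ Finset.range (n+1), e m * kraw n q m x) = p.eval (x:ℝ)) :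
    ∀ m, m ≤ n → d < m → e m = 0 := by
  set P : Polynomial ℝ :=
    (∑ m ∈ Finset.range (n+1), Polynomial.C (e m) * KP n q m) - p with hPdef
  have hPdeg : P.natDegree ≤ n := by
    refine le_trans (Polynomial.natDegree_sub_le _ _) ?_
    rw [max_le_iff]
    constructor
    · apply Polynomial.natDegree_sum_le_of_forall_le
      intro j hj
      rw [Finset.mem_range] at hj
      refine le_trans (Polynomial.natDegree_mul_le) ?_
      rw [Polynomial.natDegree_C, zero_add]
      exact le_trans (KP_natDegree_le n q j) (by omega)
    · omega
  have hP0 : P = 0 := by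
    apply Polynomial.eq_zero_of_natDegree_lt_card_of_eval_eq_zero P
      (f := fun i : Fin (n+1) => ((i : ℕ) : ℝ))
    · intro i j hij
      simp only at hij
      have : (i:ℕ) = (j:ℕ) := by exact_mod_cast hij
      exact Fin.ext this
    · intro i
      rw [hPdef]
      rw [Polynomial.eval_sub, Polynomial.eval_finset_sum]
      have : ∀ m ∈ Finset.range (n+1),
          (Polynomial.C (e m) * KP n q m).eval ((i:ℕ):ℝ) = e m * kraw n q m i := by
        intro m _
        rw [Polynomial.eval_mul, Polynomial.eval_C, KP_eval n q m i (by omega)]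
      rw [Finset.sum_congr rfl this, heval i (by omega), sub_self]
    · rw [Fintype.card_fin]
      omega
  suffices H : ∀ i : ℕ, ∀ m, m ≤ n → d < m → n - m = i → e m = 0 by
    exact fun m hm hdm => H (n-m) m hm hdm rfl
  intro i
  induction i using Nat.strong_induction_on with
  | _ i ih =>
    intro m hm hdm hnm
    have hc : P.coeff m = 0 := by rw [hP0]; simp
    rw [hPdef, Polynomial.coeff_sub, Polynomial.finset_sum_coeff] at hc
    have hpc : p.coeff m = 0 := Polynomial.coeff_eq_zero_of_natDegree_lt (by omega)
    have hsingle : ∑ k ∈ Finset.range (n+1), (Polynomial.C (e k) * KP n q k).coeff m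
        = e m * (KP n q m).coeff m := by
      rw [Finset.sum_eq_single m]
      · rw [Polynomial.coeff_C_mul]
      · intro k hk hkm
        rw [Finset.mem_range] at hk
        rw [Polynomial.coeff_C_mul]
        rcases lt_or_gt_of_ne hkm with h | h
        · rw [Polynomial.coeff_eq_zero_of_natDegree_lt
            (lt_of_le_of_lt (KP_natDegree_le n q k) h), mul_zero]
        · rw [ih (n-k) (by omega) k (by omega) (by omega) rfl, zero_mul]
      · intro h
        exact absurd (Finset.mem_range.2 (by omega)) h
    rw [hsingle, hpc, sub_zero, KP_coeff_top n q m hq] at hc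
    have hne : (-1:ℝ)^m * (q:ℝ)^m / (m.factorial : ℝ) ≠ 0 := by
      have h1 : (0:ℝ) < (q:ℝ)^m := by positivity
      have h2 : (0:ℝ) < (m.factorial : ℝ) := by positivity
      have h3 : (-1:ℝ)^m ≠ 0 := by
        rcases Nat.even_or_odd m with he | ho
        · rw [he.neg_one_pow]; norm_num
        · rw [ho.neg_one_pow]; norm_num
      exact div_ne_zero (mul_ne_zero h3 (ne_of_gt h1)) (ne_of_gt h2)
    exact (mul_eq_zero.1 hc).resolve_right hne



lemma dd_sign (n : ℕ) (f : ℕ → ℝ) (hf : CompletelyMonotonicOn f 0 n) (S : Finset ℕ)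
    (hS : S.Nonempty) (hSn : ∀ x ∈ S, x ≤ n) : 0 ≤ (-1:ℝ)^(S.card - 1) * dd f S :=
  dd_sign_aux n f hf _ S hS hSn rfl

lemma prod_range_two_mul (g : ℕ → ℝ) (s : ℕ) :
    ∏ i ∈ Finset.range (2*s), g i = ∏ i ∈ Finset.range s, (g (2*i) * g (2*i+1)) := by
  induction s with
  | zero => simp
  | succ s ih =>
    have h2 : 2*(s+1) = (2*s + 1) + 1 := by ring
    rw [h2, Finset.prod_range_succ, Finset.prod_range_succ, ih, Finset.prod_range_succ]
    ring

theorem uo_of_pairCovering_design_pd' {q n t : ℕ} (hq : 2 ≤ q) (hn : 1 ≤ n)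
    {N : ℝ} {A : ℕ → ℝ} (hA : IsQuasicode q n N A)
    (b : ℕ → ℕ) (hcov : IsPairCovering n t A b)
    (hdesign : IsDesign q n (t-1) A)
    (hpd : ∀ j, 1 ≤ j → j ≤ t - 1 →
      PositiveDefinite q n (fun x => ∏ i ∈ Finset.range j, ((b (t-1-i) : ℝ) - (x : ℝ)))) :
    IsUOQuasicode q n N A := by
  constructor
  · exact hA
  intro f hf B hB
  rcases Nat.eq_zero_or_pos t with ht0 | ht1
  · -- degenerate case t = 0 : A and B are both the trivial quasicode
    subst ht0
    have hA0 : ∀ i, 1 ≤ i → i ≤ n → A i = 0 := by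
      intro i h1 h2
      by_contra hne
      obtain ⟨k, hk, _⟩ := hcov.covers i h1 h2 hne
      omega
    have hNsum : ∀ (X : ℕ → ℝ), (∑ i ∈ Finset.range (n+1), X i)
        = X 0 + ∑ i ∈ Finset.range n, X (i+1) := by
      intro X
      rw [Finset.sum_range_succ' X n]
      ring
    have hN1 : N = 1 := by
      rw [← hA.size, hNsum, hA.zeroth, Finset.sum_eq_zero, add_zero]
      intro i hi
      rw [Finset.mem_range] at hi
      exact hA0 (i+1) (by omega) (by omega)
    have hBzero : ∀ i ∈ Finset.range n, B (i+1) = 0 := by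
      have hsum : ∑ i ∈ Finset.range n, B (i+1) = 0 := by
        have := hB.size
        rw [hNsum, hB.zeroth, hN1] at this
        linarith
      intro i hi
      have := (Finset.sum_eq_zero_iff_of_nonneg (fun i hi => by
        rw [Finset.mem_range] at hi
        exact hB.nonneg (i+1) (by omega))).1 hsum
      exact this i hi
    rw [hNsum (fun i => f i * A i), hNsum (fun i => f i * B i)]
    have h1 : ∑ i ∈ Finset.range n, f (i+1) * A (i+1) = 0 :=
      Finset.sum_eq_zero (fun i hi => by
        rw [Finset.mem_range] at hi
        rw [hA0 (i+1) (by omega) (by omega), mul_zero])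
    have h2 : ∑ i ∈ Finset.range n, f (i+1) * B (i+1) = 0 :=
      Finset.sum_eq_zero (fun i hi => by rw [hBzero i hi, mul_zero])
    rw [h1, h2, hA.zeroth, hB.zeroth]
  -- main case : 1 ≤ t
  -- basic facts about the nodes
  have hbmono : ∀ i, i < t → i + 1 ≤ b i := by
    intro i
    induction i with
    | zero => intro h; exact (hcov.mem 0 h).1
    | succ i ih =>
      intro h
      have h1 := ih (by omega)
      have h2 := hcov.mono i (i+1) (by omega) h
      omega
  have htn : t ≤ n := by
    have h1 := hbmono (t-1) (by omega)
    have h2 := (hcov.mem (t-1) (by omega)).2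
    omega
  set yf : ℕ → ℕ := fun i => b (t - 1 - i) with hyfdef
  have hyinj : ∀ i j, i < t → j < t → yf i = yf j → i = j := by
    intro i j hi hj hij
    simp only [hyfdef] at hij
    by_contra hne
    rcases lt_or_gt_of_ne hne with hlt | hlt
    · have h2 := hcov.mono (t-1-j) (t-1-i) (by omega) (by omega)
      omega
    · have h2 := hcov.mono (t-1-i) (t-1-j) (by omega) (by omega)
      omega
  have hyle : ∀ i, i < t → yf i ≤ n := fun i hi => (hcov.mem (t-1-i) (by omega)).2
  have hyge : ∀ i, i < t → 1 ≤ yf i := fun i hi => (hcov.mem (t-1-i) (by omega)).1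
  -- the Hermite interpolant
  set c : ℕ → ℝ := fun k => dd f (Nodes yf (k+1)) with hcdef
  set h : ℕ → ℝ := fun x =>
    ∑ k ∈ Finset.range t, c k * ∏ i ∈ Finset.range k, ((x:ℝ) - (yf i : ℝ)) with hhdef
  have hNodes_card : ∀ k, k ≤ t → (Nodes yf k).card = k := by
    intro k hk
    rw [Nodes, Finset.card_image_of_injOn, Finset.card_range]
    intro i hi j hj hij
    rw [Finset.mem_coe, Finset.mem_range] at hi hj
    exact hyinj i j (by omega) (by omega) hij
  have hNodes_le : ∀ k, k ≤ t → ∀ x ∈ Nodes yf k, x ≤ n := by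
    intro k hk x hx
    obtain ⟨i, hi, hix⟩ := Finset.mem_image.1 hx
    rw [Finset.mem_range] at hi
    exact hix ▸ hyle i (by omega)
  -- (1) interpolation at the nodes
  have h_node : ∀ j, j < t → h (yf j) = f (yf j) := by
    intro j hj
    simp only [hhdef, hcdef]
    exact (newton_eval_node f yf t hyinj j hj).symm
  -- (2) h ≤ f on {0,…,n}
  have h_le : ∀ x : ℕ, x ≤ n → h x ≤ f x := by
    intro x hx
    by_cases hxn : ∃ j, j < t ∧ x = yf j
    · obtain ⟨j, hj, rfl⟩ := hxn
      rw [h_node j hj]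
    · push_neg at hxn
      have hxn' : ∀ i, i < t → x ≠ yf i := fun i hi => hxn i hi
      have hrem := newton_aux f yf t hyinj t le_rfl x hxn'
      have hxnot : x ∉ Nodes yf t := by
        intro hmem
        obtain ⟨i, hi, hix⟩ := Finset.mem_image.1 hmem
        rw [Finset.mem_range] at hi
        exact hxn i hi hix.symm
      -- sign of the divided difference
      have hcard : (insert x (Nodes yf t)).card = t + 1 := by
        rw [Finset.card_insert_of_notMem hxnot, hNodes_card t le_rfl]
      have hsign := dd_sign n f hf (insert x (Nodes yf t))
        ⟨x, Finset.mem_insert_self x _⟩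
        (by
          intro z hz
          rcases Finset.mem_insert.1 hz with hz | hz
          · exact hz ▸ hx
          · exact hNodes_le t le_rfl z hz)
      rw [hcard] at hsign
      simp only [Nat.add_sub_cancel] at hsign
      -- sign of the product
      have hprod : ∏ i ∈ Finset.range t, ((x:ℝ) - (yf i : ℝ))
          = ∏ i ∈ Finset.range t, ((x:ℝ) - (b i : ℝ)) := by
        exact Finset.prod_range_reflect (fun j => ((x:ℝ) - (b j : ℝ))) t
      have hpair : ∀ i : ℕ, 2*i+1 < t → 0 ≤ ((x:ℝ) - (b (2*i) : ℝ)) * ((x:ℝ) - (b (2*i+1) : ℝ)) := by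
        intro i hi
        have hb1 := hcov.pairs i hi
        rcases le_or_gt x (b (2*i)) with hle | hlt
        · have hx1 : (x:ℝ) ≤ (b (2*i) : ℝ) := by exact_mod_cast hle
          have hx2 : (x:ℝ) ≤ (b (2*i+1) : ℝ) := by
            have : x ≤ b (2*i+1) := by omega
            exact_mod_cast this
          nlinarith
        · apply mul_nonneg
          · have : (b (2*i) : ℝ) ≤ (x:ℝ) := by exact_mod_cast hlt.le
            linarith
          · have : (b (2*i+1) : ℝ) ≤ (x:ℝ) := by
              have : b (2*i+1) ≤ x := by omega
              exact_mod_cast this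
            linarith
      rcases Nat.even_or_odd t with ⟨s, hs⟩ | ⟨s, hs⟩
      · -- t even
        have hst : t = 2*s := by omega
        have hprodpos : 0 ≤ ∏ i ∈ Finset.range t, ((x:ℝ) - (b i : ℝ)) := by
          rw [hst, prod_range_two_mul]
          apply Finset.prod_nonneg
          intro i hi
          rw [Finset.mem_range] at hi
          exact hpair i (by omega)
        have hsign' : 0 ≤ dd f (insert x (Nodes yf t)) := by
          have hneg : (-1:ℝ)^t = 1 := Even.neg_one_pow ⟨s, hs⟩
          rw [hneg, one_mul] at hsign
          exact hsign
        have hfh : f x - h x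
            = dd f (insert x (Nodes yf t)) * ∏ i ∈ Finset.range t, ((x:ℝ) - (yf i : ℝ)) := by
          simp only [hhdef, hcdef]
          linarith [hrem]
        have : 0 ≤ f x - h x := by
          rw [hfh, hprod]
          exact mul_nonneg hsign' hprodpos
        linarith
      · -- t odd
        have hst : t = 2*s + 1 := by omega
        have hlast : b (t-1) = n := hcov.odd_end ⟨s, by omega⟩
        have hprodneg : ∏ i ∈ Finset.range t, ((x:ℝ) - (b i : ℝ)) ≤ 0 := by
          rw [hst, Finset.prod_range_succ]
          have h1 : 0 ≤ ∏ i ∈ Finset.range (2*s), ((x:ℝ) - (b i : ℝ)) := by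
            rw [prod_range_two_mul]
            apply Finset.prod_nonneg
            intro i hi
            rw [Finset.mem_range] at hi
            exact hpair i (by omega)
          have h2 : ((x:ℝ) - (b (2*s) : ℝ)) ≤ 0 := by
            have : b (2*s) = n := by
              have : t - 1 = 2*s := by omega
              rw [← this, hlast]
            rw [this]
            have : (x:ℝ) ≤ (n:ℝ) := by exact_mod_cast hx
            linarith
          exact mul_nonpos_of_nonneg_of_nonpos h1 h2
        have hsign' : dd f (insert x (Nodes yf t)) ≤ 0 := by
          have hneg : (-1:ℝ)^t = -1 := Odd.neg_one_pow ⟨s, hs⟩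
          rw [hneg] at hsign
          linarith [hsign]
        have hfh : f x - h x
            = dd f (insert x (Nodes yf t)) * ∏ i ∈ Finset.range t, ((x:ℝ) - (yf i : ℝ)) := by
          simp only [hhdef, hcdef]
          linarith [hrem]
        have : 0 ≤ f x - h x := by
          rw [hfh, hprod]
          nlinarith [hsign', hprodneg]
        linarith
  -- (3) signs of the Newton coefficients
  have c_sign : ∀ k, k < t → 0 ≤ (-1:ℝ)^k * c k := by
    intro k hk
    have := dd_sign n f hf (Nodes yf (k+1))
      ⟨yf 0, Finset.mem_image.2 ⟨0, Finset.mem_range.2 (by omega), rfl⟩⟩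
      (hNodes_le (k+1) (by omega))
    rw [hNodes_card (k+1) (by omega)] at this
    simp only [Nat.add_sub_cancel] at this
    simp only [hcdef]
    exact this
  -- (4) comparison of the q_k sums
  have qq_comp : ∀ k, 1 ≤ k → k < t →
      ∑ i ∈ Finset.range (n+1), (∏ l ∈ Finset.range k, ((yf l : ℝ) - (i:ℝ))) * A i
        ≤ ∑ i ∈ Finset.range (n+1), (∏ l ∈ Finset.range k, ((yf l : ℝ) - (i:ℝ))) * B i := by
    intro k hk1 hkt
    obtain ⟨e, he_nonneg, he_eq⟩ := hpd k hk1 (by omega)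
    -- the coefficients of index > k vanish
    have he_zero : ∀ m, m ≤ n → k < m → e m = 0 := by
      apply kraw_coeff_vanish n q (by omega) e
        (∏ l ∈ Finset.range k, (Polynomial.C ((yf l : ℝ)) - Polynomial.X)) k (by omega)
      · refine le_trans (Polynomial.natDegree_prod_le _ _) ?_
        refine le_trans (Finset.sum_le_sum (g := fun _ => 1) ?_) ?_
        · intro l _
          have hC : Polynomial.C ((yf l : ℝ)) - Polynomial.X
              = -(Polynomial.X - Polynomial.C ((yf l : ℝ))) := by ring
          rw [hC, Polynomial.natDegree_neg, Polynomial.natDegree_X_sub_C]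
        · simp
      · intro x hx
        rw [← he_eq x hx, Polynomial.eval_prod]
        apply Finset.prod_congr rfl
        intro l _
        rw [Polynomial.eval_sub, Polynomial.eval_C, Polynomial.eval_X]
    have he_eq' : ∀ i : ℕ, i ≤ n → (∏ l ∈ Finset.range k, ((yf l : ℝ) - (i:ℝ)))
        = ∑ j ∈ Finset.range (n+1), e j * kraw n q j i := by
      intro i hi
      have h0 := he_eq i hi
      simp only at h0
      simp only [hyfdef]
      exact h0
    -- swap sums
    have hswap : ∀ (X : ℕ → ℝ), (∀ i, i ≤ n → 0 ≤ X i) →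
        ∑ i ∈ Finset.range (n+1), (∏ l ∈ Finset.range k, ((yf l : ℝ) - (i:ℝ))) * X i
        = ∑ j ∈ Finset.range (n+1), e j * ∑ i ∈ Finset.range (n+1), X i * kraw n q j i := by
      intro X _
      have h1 : ∀ i ∈ Finset.range (n+1),
          (∏ l ∈ Finset.range k, ((yf l : ℝ) - (i:ℝ))) * X i
          = ∑ j ∈ Finset.range (n+1), e j * (X i * kraw n q j i) := by
        intro i hi
        rw [Finset.mem_range] at hi
        rw [he_eq' i (by omega), Finset.sum_mul]
        apply Finset.sum_congr rfl
        intro j _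
        ring
      rw [Finset.sum_congr rfl h1, Finset.sum_comm]
      apply Finset.sum_congr rfl
      intro j _
      rw [Finset.mul_sum]
    rw [hswap A (fun i hi => hA.nonneg i hi), hswap B (fun i hi => hB.nonneg i hi)]
    -- A side equals e 0 * N ; B side is at least e 0 * N
    have hA_eq : ∀ j ∈ Finset.range (n+1),
        e j * ∑ i ∈ Finset.range (n+1), A i * kraw n q j i
        = if j = 0 then e 0 * N else 0 := by
      intro j hj
      rw [Finset.mem_range] at hj
      rcases Nat.eq_zero_or_pos j with rfl | hjpos
      · have hzero : ∑ i ∈ Finset.range (n+1), A i * kraw n q 0 i = N := by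
          rw [← hA.size]
          apply Finset.sum_congr rfl
          intro i _
          rw [kraw_zero, mul_one]
        rw [hzero]
        simp
      · rw [if_neg (by omega)]
        rcases le_or_gt j k with hjk | hjk
        · rw [hdesign j hjpos (by omega), mul_zero]
        · rw [he_zero j (by omega) hjk, zero_mul]
    have hB_ge : ∀ j ∈ Finset.range (n+1),
        (if j = 0 then e 0 * N else 0) ≤ e j * ∑ i ∈ Finset.range (n+1), B i * kraw n q j i := by
      intro j hj
      rw [Finset.mem_range] at hj
      rcases Nat.eq_zero_or_pos j with rfl | hjpos
      · have hzero : ∑ i ∈ Finset.range (n+1), B i * kraw n q 0 i = N := by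
          rw [← hB.size]
          apply Finset.sum_congr rfl
          intro i _
          rw [kraw_zero, mul_one]
        rw [hzero]
        simp
      · rw [if_neg (by omega)]
        exact mul_nonneg (he_nonneg j (by omega)) (hB.delsarte j (by omega))
    calc ∑ j ∈ Finset.range (n+1), e j * ∑ i ∈ Finset.range (n+1), A i * kraw n q j i
        = ∑ j ∈ Finset.range (n+1), (if j = 0 then e 0 * N else 0) :=
          Finset.sum_congr rfl hA_eq
      _ ≤ ∑ j ∈ Finset.range (n+1), e j * ∑ i ∈ Finset.range (n+1), B i * kraw n q j i :=
          Finset.sum_le_sum hB_ge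
  -- (5) Σ h A ≤ Σ h B
  have prod_flip : ∀ (k i : ℕ), ∏ l ∈ Finset.range k, ((i:ℝ) - (yf l : ℝ))
      = (-1:ℝ)^k * ∏ l ∈ Finset.range k, ((yf l : ℝ) - (i:ℝ)) := by
    intro k i
    calc ∏ l ∈ Finset.range k, ((i:ℝ) - (yf l : ℝ))
        = ∏ l ∈ Finset.range k, ((-1:ℝ) * ((yf l : ℝ) - (i:ℝ))) := by
          apply Finset.prod_congr rfl
          intro l _
          ring
      _ = (∏ _l ∈ Finset.range k, (-1:ℝ)) * ∏ l ∈ Finset.range k, ((yf l : ℝ) - (i:ℝ)) :=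
          Finset.prod_mul_distrib
      _ = (-1:ℝ)^k * ∏ l ∈ Finset.range k, ((yf l : ℝ) - (i:ℝ)) := by
          rw [Finset.prod_const, Finset.card_range]
  have hexp : ∀ (X : ℕ → ℝ),
      ∑ i ∈ Finset.range (n+1), h i * X i
      = ∑ k ∈ Finset.range t, ((-1:ℝ)^k * c k) *
          ∑ i ∈ Finset.range (n+1), (∏ l ∈ Finset.range k, ((yf l : ℝ) - (i:ℝ))) * X i := by
    intro X
    have h1 : ∀ i ∈ Finset.range (n+1), h i * X i
        = ∑ k ∈ Finset.range t, ((-1:ℝ)^k * c k) *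
            ((∏ l ∈ Finset.range k, ((yf l : ℝ) - (i:ℝ))) * X i) := by
      intro i _
      rw [hhdef]
      simp only
      rw [Finset.sum_mul]
      apply Finset.sum_congr rfl
      intro k _
      rw [prod_flip k i]
      ring
    rw [Finset.sum_congr rfl h1, Finset.sum_comm]
    apply Finset.sum_congr rfl
    intro k _
    rw [Finset.mul_sum]
  have h_energy : ∑ i ∈ Finset.range (n+1), h i * A i
      ≤ ∑ i ∈ Finset.range (n+1), h i * B i := by
    rw [hexp A, hexp B]
    apply Finset.sum_le_sum
    intro k hk
    rw [Finset.mem_range] at hk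
    rcases Nat.eq_zero_or_pos k with rfl | hkpos
    · -- k = 0 : both inner sums are N
      have hz : ∀ (X : ℕ → ℝ), (∑ i ∈ Finset.range (n+1), X i = N) →
          ∑ i ∈ Finset.range (n+1), (∏ l ∈ Finset.range 0, ((yf l : ℝ) - (i:ℝ))) * X i = N := by
        intro X hX
        rw [← hX]
        apply Finset.sum_congr rfl
        intro i _
        simp
      rw [hz A hA.size, hz B hB.size]
    · exact mul_le_mul_of_nonneg_left (qq_comp k hkpos hk) (c_sign k hk)
  -- (6) final energy comparison
  have hsplit : ∀ (X : ℕ → ℝ), ∑ i ∈ Finset.range (n+1), X i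
      = (∑ i ∈ Finset.range n, X (i+1)) + X 0 := fun X => Finset.sum_range_succ' X n
  have hAeq : ∑ i ∈ Finset.range (n+1), f i * A i
      = (∑ i ∈ Finset.range (n+1), h i * A i) + (f 0 - h 0) := by
    rw [hsplit (fun i => f i * A i), hsplit (fun i => h i * A i)]
    have heq : ∀ i ∈ Finset.range n, f (i+1) * A (i+1) = h (i+1) * A (i+1) := by
      intro i hi
      rw [Finset.mem_range] at hi
      by_cases hAi : A (i+1) = 0
      · rw [hAi, mul_zero, mul_zero]
      · obtain ⟨k, hkt, hbk⟩ := hcov.covers (i+1) (by omega) (by omega) hAi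
        have hyk : yf (t-1-k) = i+1 := by
          rw [hyfdef]
          simp only
          rw [show t-1-(t-1-k) = k by omega, hbk]
        rw [← hyk, h_node (t-1-k) (by omega)]
    rw [Finset.sum_congr rfl heq, hA.zeroth]
    ring
  have hBge : (∑ i ∈ Finset.range (n+1), h i * B i) + (f 0 - h 0)
      ≤ ∑ i ∈ Finset.range (n+1), f i * B i := by
    rw [hsplit (fun i => f i * B i), hsplit (fun i => h i * B i)]
    have hge : ∀ i ∈ Finset.range n, h (i+1) * B (i+1) ≤ f (i+1) * B (i+1) := by
      intro i hi
      rw [Finset.mem_range] at hi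
      exact mul_le_mul_of_nonneg_right (h_le (i+1) (by omega)) (hB.nonneg (i+1) (by omega))
    have := Finset.sum_le_sum hge
    rw [hB.zeroth]
    linarith
  rw [hAeq]
  linarith

/-- Proposition 5.2: let `b` list a pair covering
`b_1 < ⋯ < b_t` (zero-indexed `b 0 < ⋯ < b (t-1)`) of the quasicode `A`.
If `A` is a `(t−1)`-design and for each `1 ≤ j ≤ t−1` the function
`q_j(x) = ∏_{i=0}^{j−1} (b_{t−i} − x)` is positive definite, then `A` is a
universally optimal quasicode. -/
theorem uo_of_pairCovering_design_pd {q n t : ℕ} (hq : 2 ≤ q) (hn : 1 ≤ n)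
    {N : ℝ} {A : ℕ → ℝ} (hA : IsQuasicode q n N A)
    (b : ℕ → ℕ) (hcov : IsPairCovering n t A b)
    (hdesign : IsDesign q n (t-1) A)
    (hpd : ∀ j, 1 ≤ j → j ≤ t - 1 →
      PositiveDefinite q n (fun x => ∏ i ∈ Finset.range j, ((b (t-1-i) : ℝ) - (x : ℝ)))) :
    IsUOQuasicode q n N A :=
  uo_of_pairCovering_design_pd' hq hn hA b hcov hdesign hpd
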